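/- Under the hypotheses of the exponent estimate, the kernel K_h(x,y₀,t) = (1/(2π^{3/2}√h)) · Re[(c+ix)^{-1/2} ∫₀^{π/2} exp(−(x + i√(y₀²−t²) sin s)²/(4h(c+ix))) ds] satisfies |K_h(x,y₀,t)| ≤ C h^{−1/2} e^{−aε²/h} with a = c/(4(c²+d²)) and a constant C depending only on c, independent of x, t, h, ε; in particular K_h(x,y₀,t) → 0 as h → 0⁺ on the region D(√(y₀²−t²)) + ε ≤ |x| ≤ d. -/

import Mathlib

set_option maxHeartbeats 1000000

open Real MeasureTheory

noncomputable def Kh (c h x y₀ t : ℝ) : ℝ :=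
  (1 / (2 * Real.pi ^ ((3 : ℝ) / 2) * Real.sqrt h)) *
    ((((c : ℂ) + Complex.I * x) ^ (-(1 / 2 : ℂ)) *
        ∫ s in (0 : ℝ)..(Real.pi / 2),
          Complex.exp (-(((x : ℂ) + Complex.I * Real.sqrt (y₀ ^ 2 - t ^ 2) * Real.sin s) ^ 2)
            / (4 * h * ((c : ℂ) + Complex.I * x)))).re)

lemma key_ineq (c ε y b x : ℝ) (hc : 0 < c) (hε : 0 < ε) (hy : 0 ≤ y)
    (hb0 : 0 ≤ b) (hby : b ≤ y)
    (hx : y * Real.sqrt (c / (c + 2 * y)) + ε ≤ |x|) :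
    c * ε ^ 2 ≤ (c + 2 * b) * x ^ 2 - c * b ^ 2 := by
  set D := y * Real.sqrt (c / (c + 2 * y)) with hD
  have hcy : 0 < c + 2 * y := by linarith
  have hD0 : 0 ≤ D := mul_nonneg hy (Real.sqrt_nonneg _)
  have hD2 : D ^ 2 * (c + 2 * y) = y ^ 2 * c := by
    rw [hD, mul_pow, Real.sq_sqrt (by positivity : 0 ≤ c / (c + 2 * y))]
    field_simp
  have hx2 : (D + ε) ^ 2 ≤ x ^ 2 := by
    rw [← sq_abs x]
    exact pow_le_pow_left₀ (by positivity) hx 2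
  have h1 : D ^ 2 + ε ^ 2 ≤ x ^ 2 := by nlinarith [mul_nonneg hD0 hε.le]
  have h2 : c * b ^ 2 * (c + 2 * y) ≤ (c + 2 * b) * D ^ 2 * (c + 2 * y) := by
    have : (c + 2 * b) * D ^ 2 * (c + 2 * y) = (c + 2 * b) * (y ^ 2 * c) := by
      rw [mul_assoc, hD2]
    rw [this]
    nlinarith [mul_nonneg (mul_nonneg hc.le (sub_nonneg.2 hby))
      (by nlinarith : (0:ℝ) ≤ c * (y + b) + 2 * b * y)]
  have h3 : c * b ^ 2 ≤ (c + 2 * b) * D ^ 2 := le_of_mul_le_mul_right (by linarith) hcy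
  nlinarith [mul_le_mul_of_nonneg_left h1 (by linarith : (0:ℝ) ≤ c + 2 * b),
    mul_nonneg hb0 (sq_nonneg ε)]

lemma wre_eq (c h b x : ℝ) (hc : 0 < c) (hh : 0 < h) :
    (-(((x:ℂ) + Complex.I * b) ^ 2) / (4 * h * ((c:ℂ) + Complex.I * x))).re
      = -((c + 2 * b) * x ^ 2 - c * b ^ 2) / (4 * h * (c ^ 2 + x ^ 2)) := by
  set u : ℂ := -(((x:ℂ) + Complex.I * b) ^ 2) with hu
  set v : ℂ := 4 * h * ((c:ℂ) + Complex.I * x) with hv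
  have hure : u.re = b ^ 2 - x ^ 2 := by
    simp [hu, pow_two, Complex.mul_re, Complex.mul_im]
    try ring
  have huim : u.im = -(2 * x * b) := by
    simp [hu, pow_two, Complex.mul_re, Complex.mul_im]
    try ring
  have hvre : v.re = 4 * h * c := by
    simp [hv, Complex.mul_re, Complex.mul_im]
    try ring
  have hvim : v.im = 4 * h * x := by
    simp [hv, Complex.mul_re, Complex.mul_im]
    try ring
  have hns : Complex.normSq v = 16 * h ^ 2 * (c ^ 2 + x ^ 2) := by
    rw [Complex.normSq_apply, hvre, hvim]; ring
  rw [Complex.div_re, hure, huim, hvre, hvim, hns]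
  have h1 : (16:ℝ) * h ^ 2 * (c ^ 2 + x ^ 2) ≠ 0 := by positivity
  have h2 : (4:ℝ) * h * (c ^ 2 + x ^ 2) ≠ 0 := by positivity
  field_simp
  ring

lemma Kh_bound (c : ℝ) (hc : 0 < c) (y₀ d x t h ε : ℝ)
    (hy₀ : 0 < y₀) (hh : 0 < h) (hε : 0 < ε) (hεd : ε ≤ d) (ht : |t| ≤ y₀)
    (hxl : Real.sqrt (y₀ ^ 2 - t ^ 2) *
        Real.sqrt (c / (c + 2 * Real.sqrt (y₀ ^ 2 - t ^ 2))) + ε ≤ |x|)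
    (hxd : |x| ≤ d) :
    |Kh c h x y₀ t| ≤ (1 / Real.sqrt c) * h ^ (-(1 / 2 : ℝ)) *
      Real.exp (-(c / (4 * (c ^ 2 + d ^ 2)) * ε ^ 2) / h) := by
  set y := Real.sqrt (y₀ ^ 2 - t ^ 2) with hy
  have hy0 : 0 ≤ y := Real.sqrt_nonneg _
  have hd0 : 0 < d := lt_of_lt_of_le hε hεd
  set M := Real.exp (-(c / (4 * (c ^ 2 + d ^ 2)) * ε ^ 2) / h) with hM
  have hM0 : 0 < M := Real.exp_pos _
  set z : ℂ := (c:ℂ) + Complex.I * x with hz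
  have hzre : z.re = c := by simp [hz]
  have habs : c ≤ ‖z‖ := by
    have h1 := Complex.abs_re_le_norm z
    rwa [hzre, abs_of_pos hc] at h1
  -- bound on the cpow factor
  have hcpow : ‖(z ^ (-(1/2 : ℂ)))‖ ≤ c ^ (-(1/2) : ℝ) := by
    refine le_trans (Complex.norm_cpow_le z _) ?_
    have : (-(1/2 : ℂ)).re = -(1/2 : ℝ) := by norm_num
    have him : (-(1/2 : ℂ)).im = 0 := by norm_num
    rw [this, him, mul_zero, Real.exp_zero, div_one]
    exact Real.rpow_le_rpow_of_nonpos hc habs (by norm_num)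
  -- pointwise bound on the integrand
  have hpt : ∀ s ∈ Set.uIoc (0:ℝ) (Real.pi / 2),
      ‖Complex.exp (-(((x:ℂ) + Complex.I * y * Real.sin s) ^ 2) / (4 * h * z))‖ ≤ M := by
    intro s hs
    rw [Set.uIoc_of_le (by positivity : (0:ℝ) ≤ Real.pi / 2)] at hs
    have hs0 : 0 < s := hs.1
    have hs2 : s ≤ Real.pi / 2 := hs.2
    have hsin0 : 0 ≤ Real.sin s := Real.sin_nonneg_of_nonneg_of_le_pi hs0.le
      (by linarith [Real.pi_pos])
    set b := y * Real.sin s with hb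
    have hb0 : 0 ≤ b := mul_nonneg hy0 hsin0
    have hby : b ≤ y := mul_le_of_le_one_right hy0 (Real.sin_le_one s)
    have hcast : ((x:ℂ) + Complex.I * y * Real.sin s) = (x:ℂ) + Complex.I * (b:ℂ) := by
      rw [hb]; push_cast; ring
    rw [hcast, Complex.norm_exp]
    have hwre := wre_eq c h b x hc hh
    rw [hz, hwre]
    rw [hM]
    apply Real.exp_le_exp.2
    -- key numeric inequality
    have hkey : c * ε ^ 2 ≤ (c + 2 * b) * x ^ 2 - c * b ^ 2 :=
      key_ineq c ε y b x hc hε hy0 hb0 hby hxl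
    have hx2d : x ^ 2 ≤ d ^ 2 := by
      rw [← sq_abs x]
      exact pow_le_pow_left₀ (abs_nonneg x) hxd 2
    have hlhs : -(c / (4 * (c ^ 2 + d ^ 2)) * ε ^ 2) / h
        = -((c * ε ^ 2) / (4 * h * (c ^ 2 + d ^ 2))) := by
      field_simp
    rw [hlhs, neg_div, neg_le_neg_iff]
    exact div_le_div₀ (by linarith [sq_nonneg ε, mul_pos hc (sq_pos_of_pos hε)])
      (by linarith) (by positivity) (by nlinarith)
  -- integral bound
  have hint : ‖∫ s in (0:ℝ)..(Real.pi / 2),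
      Complex.exp (-(((x:ℂ) + Complex.I * y * Real.sin s) ^ 2) / (4 * h * z))‖
        ≤ M * |Real.pi / 2 - 0| :=
    intervalIntegral.norm_integral_le_of_norm_le_const hpt
  have hintabs : ‖(∫ s in (0:ℝ)..(Real.pi / 2),
      Complex.exp (-(((x:ℂ) + Complex.I * y * Real.sin s) ^ 2) / (4 * h * z)))‖
        ≤ M * (Real.pi / 2) := by
    refine le_trans hint ?_
    rw [sub_zero, abs_of_pos (by positivity)]
  -- assemble
  have hQ0 : 0 < Real.pi ^ ((3:ℝ)/2) := Real.rpow_pos_of_pos Real.pi_pos _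
  have hSH : 0 < Real.sqrt h := Real.sqrt_pos.2 hh
  have hSC : 0 < Real.sqrt c := Real.sqrt_pos.2 hc
  have hP0 : 0 < 1 / (2 * Real.pi ^ ((3:ℝ)/2) * Real.sqrt h) := by positivity
  have hKh : |Kh c h x y₀ t| ≤ (1 / (2 * Real.pi ^ ((3:ℝ)/2) * Real.sqrt h)) *
      (c ^ (-(1/2) : ℝ) * (M * (Real.pi / 2))) := by
    rw [Kh, abs_mul, abs_of_pos hP0]
    refine mul_le_mul_of_nonneg_left ?_ hP0.le
    refine le_trans (Complex.abs_re_le_norm _) ?_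
    rw [norm_mul]
    exact mul_le_mul hcpow hintabs (norm_nonneg _)
      (by positivity)
  refine le_trans hKh ?_
  have hcrp : c ^ (-(1/2) : ℝ) = (Real.sqrt c)⁻¹ := by
    rw [Real.rpow_neg hc.le, ← Real.sqrt_eq_rpow]
  have hhrp : h ^ (-(1/2) : ℝ) = (Real.sqrt h)⁻¹ := by
    rw [Real.rpow_neg hh.le, ← Real.sqrt_eq_rpow]
  rw [hcrp, hhrp]
  have hQpi : Real.pi ≤ Real.pi ^ ((3:ℝ)/2) := by
    nth_rewrite 1 [← Real.rpow_one Real.pi]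
    exact Real.rpow_le_rpow_of_exponent_le (by linarith [Real.pi_gt_three]) (by norm_num)
  have hlhs_eq : (1 / (2 * Real.pi ^ ((3:ℝ)/2) * Real.sqrt h)) *
      ((Real.sqrt c)⁻¹ * (M * (Real.pi / 2)))
        = (M * Real.pi) / (4 * Real.pi ^ ((3:ℝ)/2) * (Real.sqrt h * Real.sqrt c)) := by
    field_simp
    ring
  have hrhs_eq : 1 / Real.sqrt c * (Real.sqrt h)⁻¹ * M
      = M / (Real.sqrt h * Real.sqrt c) := by
    simp only [div_eq_mul_inv, mul_inv, one_mul]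
    ring
  rw [hlhs_eq, hrhs_eq, div_le_div_iff₀ (by positivity) (by positivity)]
  have hstep : Real.pi * (Real.sqrt h * Real.sqrt c)
      ≤ 4 * Real.pi ^ ((3:ℝ)/2) * (Real.sqrt h * Real.sqrt c) :=
    mul_le_mul_of_nonneg_right (by linarith) (by positivity)
  calc M * Real.pi * (Real.sqrt h * Real.sqrt c)
      = M * (Real.pi * (Real.sqrt h * Real.sqrt c)) := by ring
    _ ≤ M * (4 * Real.pi ^ ((3:ℝ)/2) * (Real.sqrt h * Real.sqrt c)) :=
        mul_le_mul_of_nonneg_left hstep hM0.le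

theorem kernel_estimate (c : ℝ) (hc : 0 < c) :
    ∃ C : ℝ, 0 < C ∧
      ∀ y₀ d x t h ε : ℝ, 0 < y₀ → 0 < h → 0 < ε → ε ≤ d → |t| ≤ y₀ →
        Real.sqrt (y₀ ^ 2 - t ^ 2) *
            Real.sqrt (c / (c + 2 * Real.sqrt (y₀ ^ 2 - t ^ 2))) + ε ≤ |x| →
        |x| ≤ d →
        (|Kh c h x y₀ t| ≤ C * h ^ (-(1 / 2 : ℝ)) *
            Real.exp (-(c / (4 * (c ^ 2 + d ^ 2)) * ε ^ 2) / h)) ∧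
        Filter.Tendsto (fun h' : ℝ => Kh c h' x y₀ t)
          (nhdsWithin 0 (Set.Ioi 0)) (nhds 0) := by
  refine ⟨1 / Real.sqrt c, by positivity, ?_⟩
  intro y₀ d x t h ε hy₀ hh hε hεd ht hxl hxd
  have hd0 : 0 < d := lt_of_lt_of_le hε hεd
  refine ⟨Kh_bound c hc y₀ d x t h ε hy₀ hh hε hεd ht hxl hxd, ?_⟩
  set A := c / (4 * (c ^ 2 + d ^ 2)) * ε ^ 2 with hA
  have hA0 : 0 < A := by positivity
  have hbound : ∀ᶠ h' in nhdsWithin (0:ℝ) (Set.Ioi 0),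
      ‖Kh c h' x y₀ t‖ ≤ (1 / Real.sqrt c) * h' ^ (-(1/2 : ℝ)) * Real.exp (-A / h') := by
    filter_upwards [self_mem_nhdsWithin] with h' hh'
    rw [Real.norm_eq_abs]
    have := Kh_bound c hc y₀ d x t h' ε hy₀ hh' hε hεd ht hxl hxd
    rw [hA, neg_div]
    rw [neg_div] at this
    exact this
  refine squeeze_zero_norm' hbound ?_
  have h1 : Filter.Tendsto (fun u : ℝ => (1 / Real.sqrt c) *
      (u ^ ((1/2 : ℝ)) * Real.exp (-A * u))) Filter.atTop (nhds 0) := by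
    have := (tendsto_rpow_mul_exp_neg_mul_atTop_nhds_zero (1/2) A hA0).const_mul
      (1 / Real.sqrt c)
    simpa using this
  have h2 := h1.comp tendsto_inv_nhdsGT_zero
  refine h2.congr' ?_
  filter_upwards [self_mem_nhdsWithin] with h' hh'
  have hh'0 : (0:ℝ) < h' := hh'
  have e1 : (h'⁻¹) ^ ((1:ℝ)/2) = h' ^ (-(1/2:ℝ)) := by
    rw [Real.inv_rpow hh'0.le, ← Real.rpow_neg hh'0.le]
  have e2 : -A * h'⁻¹ = -A / h' := (div_eq_mul_inv _ _).symm
  simp only [Function.comp_apply]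
  rw [e1, e2, mul_assoc]
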